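/- arXiv:2601.19841 — 2 statements merged into one kernel-verified Lean document; each statement's English description precedes it below -/
import Mathlib

section
/- Let f₁, f₂, g₁, g₂ : ℂ → ℂ be holomorphic functions on a connected open set such that ⟨f₁,g₁⟩ + ⟨f₂,g₂⟩ = 0 identically, where ⟨·,·⟩ is the real inner product on ℂ. If (f₁, f₂) is not identically zero and f₁, f₂ are linearly independent, then there exist real constants c₁, c₂ and a complex constant z₁ such that g₁ = i c₁ f₁ − conj(z₁) f₂ and g₂ = z₁ f₁ + i c₂ f₂. -/
open Complex ComplexConjugate

/-- The ℝ-linear map `h ↦ p * h + q * conj h` on ℂ. -/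
noncomputable def lm (p q : ℂ) : ℂ →L[ℝ] ℂ :=
  p • (ContinuousLinearMap.id ℝ ℂ) + q • (Complex.conjCLE.toContinuousLinearMap)

@[simp] lemma lm_apply (p q h : ℂ) : lm p q h = p * h + q * conj h := by
  simp [lm, Complex.conjCLE_apply, smul_eq_mul]

lemma lm_eq_zero {p q : ℂ} (h : lm p q = 0) : p = 0 ∧ q = 0 := by
  have h1 : p * 1 + q * conj 1 = 0 := by rw [← lm_apply p q 1, h]; rfl
  have h2 : p * I + q * conj I = 0 := by rw [← lm_apply p q I, h]; rfl
  simp only [map_one, mul_one, Complex.conj_I] at h1 h2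
  have h3 : p - q = 0 := by
    have hI : (p - q) * I = 0 := by linear_combination h2
    rcases mul_eq_zero.mp hI with h' | h'
    · exact h'
    · exact absurd h' I_ne_zero
  constructor
  · linear_combination (h1 + h3) / 2
  · linear_combination (h1 - h3) / 2

lemma hasFDerivAt_of_hasDerivAt {u : ℂ → ℂ} {u' z : ℂ} (hu : HasDerivAt u u' z) :
    HasFDerivAt u (lm u' 0) z := by
  have := hu.hasFDerivAt.restrictScalars ℝ
  refine this.congr_fderiv ?_
  ext h
  simp [lm_apply, mul_comm]

lemma hasFDerivAt_conj_comp {u : ℂ → ℂ} {u' z : ℂ} (hu : HasDerivAt u u' z) :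
    HasFDerivAt (fun w => conj (u w)) (lm 0 (conj u')) z := by
  have h1 := hasFDerivAt_of_hasDerivAt hu
  have h2 := (Complex.conjCLE.hasFDerivAt (x := u z)).comp z h1
  simp only [Function.comp_def, Complex.conjCLE_apply] at h2
  refine h2.congr_fderiv ?_
  ext h
  simp [lm_apply, Complex.conjCLE_apply, mul_comm]

lemma hasFDerivAt_conj_mul {u a : ℂ → ℂ} {u' a' z : ℂ}
    (hu : HasDerivAt u u' z) (ha : HasDerivAt a a' z) :
    HasFDerivAt (fun w => conj (u w) * a w) (lm (conj (u z) * a') (a z * conj u')) z := by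
  have h := (hasFDerivAt_conj_comp hu).mul (hasFDerivAt_of_hasDerivAt ha)
  refine h.congr_fderiv ?_
  ext h
  simp [lm_apply, smul_eq_mul]
  ring

lemma hasFDerivAt_mul_conj {b v : ℂ → ℂ} {b' v' z : ℂ}
    (hb : HasDerivAt b b' z) (hv : HasDerivAt v v' z) :
    HasFDerivAt (fun w => b w * conj (v w)) (lm (conj (v z) * b') (b z * conj v')) z := by
  have h := (hasFDerivAt_of_hasDerivAt hb).mul (hasFDerivAt_conj_comp hv)
  refine h.congr_fderiv ?_
  ext h
  simp [lm_apply, smul_eq_mul]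
  ring

/-- Wirtinger-type differentiation of a pointwise identity on an open set. -/
lemma wirtinger {U : Set ℂ} (hU : IsOpen U)
    (u₁ u₂ a₁ a₂ b₁ b₂ v₁ v₂ : ℂ → ℂ)
    (hu₁ : AnalyticOnNhd ℂ u₁ U) (hu₂ : AnalyticOnNhd ℂ u₂ U)
    (ha₁ : AnalyticOnNhd ℂ a₁ U) (ha₂ : AnalyticOnNhd ℂ a₂ U)
    (hb₁ : AnalyticOnNhd ℂ b₁ U) (hb₂ : AnalyticOnNhd ℂ b₂ U)
    (hv₁ : AnalyticOnNhd ℂ v₁ U) (hv₂ : AnalyticOnNhd ℂ v₂ U)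
    (h : ∀ z ∈ U, conj (u₁ z) * a₁ z + conj (u₂ z) * a₂ z
        + b₁ z * conj (v₁ z) + b₂ z * conj (v₂ z) = 0) :
    ∀ z ∈ U,
      (conj (u₁ z) * deriv a₁ z + conj (u₂ z) * deriv a₂ z
        + deriv b₁ z * conj (v₁ z) + deriv b₂ z * conj (v₂ z) = 0) ∧
      (conj (deriv u₁ z) * a₁ z + conj (deriv u₂ z) * a₂ z
        + b₁ z * conj (deriv v₁ z) + b₂ z * conj (deriv v₂ z) = 0) := by
  intro z hz
  have du₁ := (hu₁ z hz).differentiableAt.hasDerivAt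
  have du₂ := (hu₂ z hz).differentiableAt.hasDerivAt
  have da₁ := (ha₁ z hz).differentiableAt.hasDerivAt
  have da₂ := (ha₂ z hz).differentiableAt.hasDerivAt
  have db₁ := (hb₁ z hz).differentiableAt.hasDerivAt
  have db₂ := (hb₂ z hz).differentiableAt.hasDerivAt
  have dv₁ := (hv₁ z hz).differentiableAt.hasDerivAt
  have dv₂ := (hv₂ z hz).differentiableAt.hasDerivAt
  set P := conj (u₁ z) * deriv a₁ z + conj (u₂ z) * deriv a₂ z
        + deriv b₁ z * conj (v₁ z) + deriv b₂ z * conj (v₂ z) with hP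
  set Q := conj (deriv u₁ z) * a₁ z + conj (deriv u₂ z) * a₂ z
        + b₁ z * conj (deriv v₁ z) + b₂ z * conj (deriv v₂ z) with hQ
  have hF : HasFDerivAt (fun w => conj (u₁ w) * a₁ w + conj (u₂ w) * a₂ w
      + b₁ w * conj (v₁ w) + b₂ w * conj (v₂ w)) (lm P Q) z := by
    have h1 := hasFDerivAt_conj_mul du₁ da₁
    have h2 := hasFDerivAt_conj_mul du₂ da₂
    have h3 := hasFDerivAt_mul_conj db₁ dv₁
    have h4 := hasFDerivAt_mul_conj db₂ dv₂
    have := ((h1.add h2).add h3).add h4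
    refine this.congr_fderiv ?_
    ext h
    simp [lm_apply, hP, hQ]
    ring
  have hF0 : HasFDerivAt (fun w => conj (u₁ w) * a₁ w + conj (u₂ w) * a₂ w
      + b₁ w * conj (v₁ w) + b₂ w * conj (v₂ w)) (0 : ℂ →L[ℝ] ℂ) z := by
    apply (hasFDerivAt_const (0 : ℂ) z).congr_of_eventuallyEq
    filter_upwards [hU.mem_nhds hz] with w hw
    exact h w hw
  have hlm : lm P Q = 0 := hF.unique hF0
  obtain ⟨hP0, hQ0⟩ := lm_eq_zero hlm
  exact ⟨hP0, hQ0⟩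

lemma iterAnalytic {U : Set ℂ} {f : ℂ → ℂ} (hf : AnalyticOnNhd ℂ f U) (n : ℕ) :
    AnalyticOnNhd ℂ (iteratedDeriv n f) U := by
  induction n with
  | zero => simpa [iteratedDeriv_zero] using hf
  | succ n ih => rw [iteratedDeriv_succ]; exact ih.deriv

lemma iter_comb2 {U : Set ℂ} (hU : IsOpen U) {h₁ h₂ : ℂ → ℂ}
    (H₁ : AnalyticOnNhd ℂ h₁ U) (H₂ : AnalyticOnNhd ℂ h₂ U) (c₁ c₂ : ℂ) (n : ℕ) :
    ∀ z ∈ U, iteratedDeriv n (fun w => c₁ * h₁ w + c₂ * h₂ w) z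
      = c₁ * iteratedDeriv n h₁ z + c₂ * iteratedDeriv n h₂ z := by
  induction n with
  | zero => intro z hz; simp [iteratedDeriv_zero]
  | succ n ih =>
    intro z hz
    rw [iteratedDeriv_succ]
    have heq : deriv (iteratedDeriv n (fun w => c₁ * h₁ w + c₂ * h₂ w)) z
        = deriv (fun w => c₁ * iteratedDeriv n h₁ w + c₂ * iteratedDeriv n h₂ w) z := by
      apply Filter.EventuallyEq.deriv_eq
      filter_upwards [hU.mem_nhds hz] with w hw
      exact ih w hw
    rw [heq]
    have K : HasDerivAt (fun w => c₁ * iteratedDeriv n h₁ w + c₂ * iteratedDeriv n h₂ w)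
        (c₁ * deriv (iteratedDeriv n h₁) z + c₂ * deriv (iteratedDeriv n h₂) z) z :=
      (((iterAnalytic H₁ n z hz).differentiableAt.hasDerivAt).const_mul c₁).add
        (((iterAnalytic H₂ n z hz).differentiableAt.hasDerivAt).const_mul c₂)
    rw [K.deriv, iteratedDeriv_succ, iteratedDeriv_succ]

lemma iter_comb4 {U : Set ℂ} (hU : IsOpen U) {h₁ h₂ h₃ h₄ : ℂ → ℂ}
    (H₁ : AnalyticOnNhd ℂ h₁ U) (H₂ : AnalyticOnNhd ℂ h₂ U)
    (H₃ : AnalyticOnNhd ℂ h₃ U) (H₄ : AnalyticOnNhd ℂ h₄ U) (c₁ c₂ c₃ c₄ : ℂ) (n : ℕ) :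
    ∀ z ∈ U, iteratedDeriv n (fun w => c₁ * h₁ w + c₂ * h₂ w + c₃ * h₃ w + c₄ * h₄ w) z
      = c₁ * iteratedDeriv n h₁ z + c₂ * iteratedDeriv n h₂ z
        + c₃ * iteratedDeriv n h₃ z + c₄ * iteratedDeriv n h₄ z := by
  induction n with
  | zero => intro z hz; simp [iteratedDeriv_zero]
  | succ n ih =>
    intro z hz
    rw [iteratedDeriv_succ]
    have heq : deriv (iteratedDeriv n (fun w => c₁ * h₁ w + c₂ * h₂ w + c₃ * h₃ w + c₄ * h₄ w)) z
        = deriv (fun w => c₁ * iteratedDeriv n h₁ w + c₂ * iteratedDeriv n h₂ w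
            + c₃ * iteratedDeriv n h₃ w + c₄ * iteratedDeriv n h₄ w) z := by
      apply Filter.EventuallyEq.deriv_eq
      filter_upwards [hU.mem_nhds hz] with w hw
      exact ih w hw
    rw [heq]
    have K : HasDerivAt (fun w => c₁ * iteratedDeriv n h₁ w + c₂ * iteratedDeriv n h₂ w
          + c₃ * iteratedDeriv n h₃ w + c₄ * iteratedDeriv n h₄ w)
        (c₁ * deriv (iteratedDeriv n h₁) z + c₂ * deriv (iteratedDeriv n h₂) z
          + c₃ * deriv (iteratedDeriv n h₃) z + c₄ * deriv (iteratedDeriv n h₄) z) z :=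
      (((((iterAnalytic H₁ n z hz).differentiableAt.hasDerivAt).const_mul c₁).add
        (((iterAnalytic H₂ n z hz).differentiableAt.hasDerivAt).const_mul c₂)).add
        (((iterAnalytic H₃ n z hz).differentiableAt.hasDerivAt).const_mul c₃)).add
        (((iterAnalytic H₄ n z hz).differentiableAt.hasDerivAt).const_mul c₄)
    rw [K.deriv, iteratedDeriv_succ, iteratedDeriv_succ, iteratedDeriv_succ, iteratedDeriv_succ]

/-- Identity theorem: all derivatives vanish at a point ⇒ vanishes on connected open set. -/
lemma eqzero {U : Set ℂ} (hU : IsOpen U) (hUc : IsPreconnected U) {φ : ℂ → ℂ}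
    (hφ : AnalyticOnNhd ℂ φ U) {z₀ : ℂ} (hz₀ : z₀ ∈ U)
    (h : ∀ n, iteratedDeriv n φ z₀ = 0) : Set.EqOn φ 0 U := by
  apply hφ.eqOn_zero_of_preconnected_of_eventuallyEq_zero hUc hz₀
  obtain ⟨r, hr, hball⟩ := Metric.isOpen_iff.mp hU z₀ hz₀
  filter_upwards [Metric.ball_mem_nhds z₀ hr] with w hw
  have := Complex.taylorSeries_eq_on_ball' (hz := hw)
    (hf := hφ.differentiableOn.mono hball)
  rw [← this]
  simp [h]

lemma solve2 {x y u v p q : ℂ} (h1 : x * p + y * q = 0) (h2 : u * p + v * q = 0)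
    (hd : x * v - y * u ≠ 0) : p = 0 ∧ q = 0 := by
  constructor
  · have : (x * v - y * u) * p = 0 := by linear_combination v * h1 - y * h2
    rcases mul_eq_zero.mp this with h | h
    · exact absurd h hd
    · exact h
  · have : (x * v - y * u) * q = 0 := by linear_combination x * h2 - u * h1
    rcases mul_eq_zero.mp this with h | h
    · exact absurd h hd
    · exact h

/-- The real inner product on ℂ. -/
noncomputable def rip (a b : ℂ) : ℝ := a.re * b.re + a.im * b.im

lemma rip_complex (a b : ℂ) : conj a * b + a * conj b = ((rip a b : ℝ) : ℂ) * 2 := by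
  apply Complex.ext <;>
    simp [rip, Complex.mul_re, Complex.mul_im] <;> ring

theorem stmt_3 (U : Set ℂ) (hU : IsOpen U) (hUc : IsConnected U)
    (f₁ f₂ g₁ g₂ : ℂ → ℂ)
    (hf₁ : DifferentiableOn ℂ f₁ U) (hf₂ : DifferentiableOn ℂ f₂ U)
    (hg₁ : DifferentiableOn ℂ g₁ U) (hg₂ : DifferentiableOn ℂ g₂ U)
    (horth : ∀ z ∈ U, rip (f₁ z) (g₁ z) + rip (f₂ z) (g₂ z) = 0)
    (hnz : ∃ z ∈ U, f₁ z ≠ 0 ∨ f₂ z ≠ 0)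
    (hindep : ∀ a b : ℂ, (∀ z ∈ U, a * f₁ z + b * f₂ z = 0) → a = 0 ∧ b = 0) :
    ∃ (c₁ c₂ : ℝ) (z₁ : ℂ), ∀ z ∈ U,
      g₁ z = I * (c₁ : ℂ) * f₁ z - (starRingEnd ℂ) z₁ * f₂ z ∧
      g₂ z = z₁ * f₁ z + I * (c₂ : ℂ) * f₂ z := by
  have Hf₁ : AnalyticOnNhd ℂ f₁ U := hf₁.analyticOnNhd hU
  have Hf₂ : AnalyticOnNhd ℂ f₂ U := hf₂.analyticOnNhd hU
  have Hg₁ : AnalyticOnNhd ℂ g₁ U := hg₁.analyticOnNhd hU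
  have Hg₂ : AnalyticOnNhd ℂ g₂ U := hg₂.analyticOnNhd hU
  -- the key derivative relations
  have key : ∀ m n : ℕ, ∀ z ∈ U,
      conj (iteratedDeriv m f₁ z) * iteratedDeriv n g₁ z
      + conj (iteratedDeriv m f₂ z) * iteratedDeriv n g₂ z
      + iteratedDeriv n f₁ z * conj (iteratedDeriv m g₁ z)
      + iteratedDeriv n f₂ z * conj (iteratedDeriv m g₂ z) = 0 := by
    have step : ∀ m n : ℕ, (∀ z ∈ U,
        conj (iteratedDeriv m f₁ z) * iteratedDeriv n g₁ z
        + conj (iteratedDeriv m f₂ z) * iteratedDeriv n g₂ z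
        + iteratedDeriv n f₁ z * conj (iteratedDeriv m g₁ z)
        + iteratedDeriv n f₂ z * conj (iteratedDeriv m g₂ z) = 0) →
        (∀ z ∈ U,
        conj (iteratedDeriv m f₁ z) * iteratedDeriv (n+1) g₁ z
        + conj (iteratedDeriv m f₂ z) * iteratedDeriv (n+1) g₂ z
        + iteratedDeriv (n+1) f₁ z * conj (iteratedDeriv m g₁ z)
        + iteratedDeriv (n+1) f₂ z * conj (iteratedDeriv m g₂ z) = 0) ∧
        (∀ z ∈ U,
        conj (iteratedDeriv (m+1) f₁ z) * iteratedDeriv n g₁ z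
        + conj (iteratedDeriv (m+1) f₂ z) * iteratedDeriv n g₂ z
        + iteratedDeriv n f₁ z * conj (iteratedDeriv (m+1) g₁ z)
        + iteratedDeriv n f₂ z * conj (iteratedDeriv (m+1) g₂ z) = 0) := by
      intro m n h
      have W := wirtinger hU _ _ _ _ _ _ _ _
        (iterAnalytic Hf₁ m) (iterAnalytic Hf₂ m)
        (iterAnalytic Hg₁ n) (iterAnalytic Hg₂ n)
        (iterAnalytic Hf₁ n) (iterAnalytic Hf₂ n)
        (iterAnalytic Hg₁ m) (iterAnalytic Hg₂ m) h
      constructor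
      · intro z hz
        have := (W z hz).1
        simpa [iteratedDeriv_succ] using this
      · intro z hz
        have := (W z hz).2
        simpa [iteratedDeriv_succ] using this
    intro m
    induction m with
    | zero =>
      intro n
      induction n with
      | zero =>
        intro z hz
        simp only [iteratedDeriv_zero]
        have h1 := rip_complex (f₁ z) (g₁ z)
        have h2 := rip_complex (f₂ z) (g₂ z)
        have h3 := horth z hz
        have h4 : ((rip (f₁ z) (g₁ z) + rip (f₂ z) (g₂ z) : ℝ) : ℂ) = 0 := by
          rw [h3]; simp
        push_cast at h4
        linear_combination h1 + h2 + 2 * h4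
      | succ n ih => exact (step 0 n ih).1
    | succ m ih =>
      intro n
      exact (step m n (ih n)).2
  -- pick the base point
  obtain ⟨z₀, hz₀, hz₀nz⟩ := hnz
  -- find derivative orders m n with independent derivative vectors at z₀
  have hmn : ∃ m n : ℕ,
      iteratedDeriv m f₁ z₀ * iteratedDeriv n f₂ z₀
      - iteratedDeriv m f₂ z₀ * iteratedDeriv n f₁ z₀ ≠ 0 := by
    by_contra hcon
    push_neg at hcon
    by_cases hall : ∀ m, iteratedDeriv m f₁ z₀ = 0 ∧ iteratedDeriv m f₂ z₀ = 0
    · rcases hz₀nz with h | h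
      · exact h (by simpa [iteratedDeriv_zero] using (hall 0).1)
      · exact h (by simpa [iteratedDeriv_zero] using (hall 0).2)
    · push_neg at hall
      obtain ⟨m₀, hm₀⟩ := hall
      set v1 := iteratedDeriv m₀ f₁ z₀ with hv1
      set v2 := iteratedDeriv m₀ f₂ z₀ with hv2
      have hdif : DifferentiableOn ℂ (fun w => (-v2) * f₁ w + v1 * f₂ w) U := by
        fun_prop
      have hψ : Set.EqOn (fun w => (-v2) * f₁ w + v1 * f₂ w) 0 U := by
        apply eqzero hU hUc.isPreconnected (hdif.analyticOnNhd hU) hz₀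
        intro q
        rw [iter_comb2 hU Hf₁ Hf₂ (-v2) v1 q z₀ hz₀]
        linear_combination hcon m₀ q
      obtain ⟨h1, h2⟩ := hindep (-v2) v1 (fun z hz => by
        have := hψ hz; simpa using this)
      rcases Classical.em (v1 = 0) with hv | hv
      · exact hm₀ hv (by simpa using h1)
      · exact hv h2
  obtain ⟨m, n, hd⟩ := hmn
  set u1 := iteratedDeriv m f₁ z₀ with hu1
  set u2 := iteratedDeriv m f₂ z₀ with hu2
  set v1 := iteratedDeriv n f₁ z₀ with hv1
  set v2 := iteratedDeriv n f₂ z₀ with hv2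
  set Gm1 := iteratedDeriv m g₁ z₀ with hGm1d
  set Gm2 := iteratedDeriv m g₂ z₀ with hGm2d
  set Gn1 := iteratedDeriv n g₁ z₀ with hGn1d
  set Gn2 := iteratedDeriv n g₂ z₀ with hGn2d
  -- the chi identities: for k ∈ {m, n}
  have chi : ∀ k : ℕ, ∀ w ∈ U,
      conj (iteratedDeriv k g₁ z₀) * f₁ w + conj (iteratedDeriv k g₂ z₀) * f₂ w
      + conj (iteratedDeriv k f₁ z₀) * g₁ w + conj (iteratedDeriv k f₂ z₀) * g₂ w = 0 := by
    intro k
    have hzero : Set.EqOn (fun w => conj (iteratedDeriv k g₁ z₀) * f₁ w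
        + conj (iteratedDeriv k g₂ z₀) * f₂ w
        + conj (iteratedDeriv k f₁ z₀) * g₁ w + conj (iteratedDeriv k f₂ z₀) * g₂ w) 0 U := by
      have hdif : DifferentiableOn ℂ (fun w => conj (iteratedDeriv k g₁ z₀) * f₁ w
          + conj (iteratedDeriv k g₂ z₀) * f₂ w
          + conj (iteratedDeriv k f₁ z₀) * g₁ w + conj (iteratedDeriv k f₂ z₀) * g₂ w) U := by
        fun_prop
      apply eqzero hU hUc.isPreconnected (hdif.analyticOnNhd hU) hz₀
      intro q
      rw [iter_comb4 hU Hf₁ Hf₂ Hg₁ Hg₂ _ _ _ _ q z₀ hz₀]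
      linear_combination key k q z₀ hz₀
    intro w hw
    have := hzero hw
    simpa using this
  have Em := chi m
  have En := chi n
  set D := conj u1 * conj v2 - conj u2 * conj v1 with hD
  have hDne : D ≠ 0 := by
    rw [hD]
    intro hc
    apply hd
    have h2 := congrArg (starRingEnd ℂ) hc
    simpa [map_sub, map_mul] using h2
  set s1 := conj Gm1 with hs1
  set s2 := conj Gm2 with hs2
  set t1 := conj Gn1 with ht1
  set t2 := conj Gn2 with ht2
  set a11 := (conj u2 * t1 - conj v2 * s1) / D with ha11
  set a12 := (conj u2 * t2 - conj v2 * s2) / D with ha12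
  set a21 := (conj v1 * s1 - conj u1 * t1) / D with ha21
  set a22 := (conj v1 * s2 - conj u1 * t2) / D with ha22
  have rep1 : ∀ w ∈ U, g₁ w = a11 * f₁ w + a12 * f₂ w := by
    intro w hw
    have hEm := Em w hw
    have hEn := En w hw
    have h : g₁ w = ((conj u2 * t1 - conj v2 * s1) * f₁ w
        + (conj u2 * t2 - conj v2 * s2) * f₂ w) / D := by
      rw [eq_div_iff hDne, hD]
      linear_combination conj v2 * hEm - conj u2 * hEn
    rw [h, ha11, ha12]
    ring
  have rep2 : ∀ w ∈ U, g₂ w = a21 * f₁ w + a22 * f₂ w := by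
    intro w hw
    have hEm := Em w hw
    have hEn := En w hw
    have h : g₂ w = ((conj v1 * s1 - conj u1 * t1) * f₁ w
        + (conj v1 * s2 - conj u1 * t2) * f₂ w) / D := by
      rw [eq_div_iff hDne, hD]
      linear_combination conj u1 * hEn - conj v1 * hEm
    rw [h, ha21, ha22]
    ring
  -- derivative values of g at z₀ in terms of A
  have hrepEq1 : Set.EqOn g₁ (fun w => a11 * f₁ w + a12 * f₂ w) U := fun w hw => rep1 w hw
  have hrepEq2 : Set.EqOn g₂ (fun w => a21 * f₁ w + a22 * f₂ w) U := fun w hw => rep2 w hw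
  have hGm1e : Gm1 = a11 * u1 + a12 * u2 := by
    have h1 := (hrepEq1.iteratedDeriv_of_isOpen hU m) hz₀
    rw [hGm1d, h1, iter_comb2 hU Hf₁ Hf₂ a11 a12 m z₀ hz₀]
  have hGm2e : Gm2 = a21 * u1 + a22 * u2 := by
    have h1 := (hrepEq2.iteratedDeriv_of_isOpen hU m) hz₀
    rw [hGm2d, h1, iter_comb2 hU Hf₁ Hf₂ a21 a22 m z₀ hz₀]
  have hGn1e : Gn1 = a11 * v1 + a12 * v2 := by
    have h1 := (hrepEq1.iteratedDeriv_of_isOpen hU n) hz₀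
    rw [hGn1d, h1, iter_comb2 hU Hf₁ Hf₂ a11 a12 n z₀ hz₀]
  have hGn2e : Gn2 = a21 * v1 + a22 * v2 := by
    have h1 := (hrepEq2.iteratedDeriv_of_isOpen hU n) hz₀
    rw [hGn2d, h1, iter_comb2 hU Hf₁ Hf₂ a21 a22 n z₀ hz₀]
  have hGm1c : conj Gm1 = conj a11 * conj u1 + conj a12 * conj u2 := by
    rw [hGm1e]; simp only [map_add, map_mul]
  have hGm2c : conj Gm2 = conj a21 * conj u1 + conj a22 * conj u2 := by
    rw [hGm2e]; simp only [map_add, map_mul]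
  have hGn1c : conj Gn1 = conj a11 * conj v1 + conj a12 * conj v2 := by
    rw [hGn1e]; simp only [map_add, map_mul]
  have hGn2c : conj Gn2 = conj a21 * conj v1 + conj a22 * conj v2 := by
    rw [hGn2e]; simp only [map_add, map_mul]
  set c11 := a11 + conj a11 with hc11
  set c12 := a12 + conj a21 with hc12
  set c21 := a21 + conj a12 with hc21
  set c22 := a22 + conj a22 with hc22
  have Rmm := key m m z₀ hz₀
  have Rmn := key m n z₀ hz₀
  have Rnm := key n m z₀ hz₀
  have Rnn := key n n z₀ hz₀
  have Tmm : conj u1 * (c11 * u1 + c12 * u2) + conj u2 * (c21 * u1 + c22 * u2) = 0 := by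
    rw [hc11, hc12, hc21, hc22]
    linear_combination Rmm - conj u1 * hGm1e - conj u2 * hGm2e - u1 * hGm1c - u2 * hGm2c
  have Tnm : conj v1 * (c11 * u1 + c12 * u2) + conj v2 * (c21 * u1 + c22 * u2) = 0 := by
    rw [hc11, hc12, hc21, hc22]
    linear_combination Rnm - conj v1 * hGm1e - conj v2 * hGm2e - u1 * hGn1c - u2 * hGn2c
  have Tmn : conj u1 * (c11 * v1 + c12 * v2) + conj u2 * (c21 * v1 + c22 * v2) = 0 := by
    rw [hc11, hc12, hc21, hc22]
    linear_combination Rmn - conj u1 * hGn1e - conj u2 * hGn2e - v1 * hGm1c - v2 * hGm2c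
  have Tnn : conj v1 * (c11 * v1 + c12 * v2) + conj v2 * (c21 * v1 + c22 * v2) = 0 := by
    rw [hc11, hc12, hc21, hc22]
    linear_combination Rnn - conj v1 * hGn1e - conj v2 * hGn2e - v1 * hGn1c - v2 * hGn2c
  have hDne' : conj u1 * conj v2 - conj u2 * conj v1 ≠ 0 := by rw [← hD]; exact hDne
  obtain ⟨hCu1, hCu2⟩ := solve2 Tmm Tnm hDne'
  obtain ⟨hCv1, hCv2⟩ := solve2 Tmn Tnn hDne'
  have hc11_0 : c11 = 0 ∧ c12 = 0 := by
    apply solve2 (x := u1) (y := u2) (u := v1) (v := v2)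
    · linear_combination hCu1
    · linear_combination hCv1
    · exact hd
  have hc2_0 : c21 = 0 ∧ c22 = 0 := by
    apply solve2 (x := u1) (y := u2) (u := v1) (v := v2)
    · linear_combination hCu2
    · linear_combination hCv2
    · exact hd
  obtain ⟨hC11, hC12⟩ := hc11_0
  obtain ⟨hC21, hC22⟩ := hc2_0
  -- extract the structure of A
  have ha11re : a11.re = 0 := by
    have h := hC11
    rw [hc11, Complex.add_conj] at h
    have : (2 * a11.re : ℝ) = 0 := by exact_mod_cast h
    linarith
  have ha22re : a22.re = 0 := by
    have h := hC22
    rw [hc22, Complex.add_conj] at h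
    have : (2 * a22.re : ℝ) = 0 := by exact_mod_cast h
    linarith
  have ha11e : a11 = I * (a11.im : ℂ) := by
    apply Complex.ext <;> simp [ha11re]
  have ha22e : a22 = I * (a22.im : ℂ) := by
    apply Complex.ext <;> simp [ha22re]
  have ha12e : a12 = - conj a21 := by
    have h := hC12
    rw [hc12] at h
    linear_combination h
  refine ⟨a11.im, a22.im, a21, fun z hz => ⟨?_, ?_⟩⟩
  · linear_combination rep1 z hz + f₁ z * ha11e + f₂ z * ha12e
  · linear_combination rep2 z hz + f₂ z * ha22e
end

section
/- Let f₁, f₂ : U → ℂ be holomorphic on an open set U ⊆ ℂ, let c ∈ ℝ, and set A = |f₁|² + c|f₂|². Then A·ΔA − |∇A|² = 4c·|f₁ f₂' − f₂ f₁'|², where Δ and ∇ are taken with respect to the real coordinates of z. -/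
open Complex

/-- The Laplacian of a real-valued function on ℂ ≅ ℝ². -/
noncomputable def lap (F : ℂ → ℝ) (z : ℂ) : ℝ :=
  fderiv ℝ (fun w => fderiv ℝ F w 1) z 1 + fderiv ℝ (fun w => fderiv ℝ F w I) z I

/-- The squared norm of the gradient of a real-valued function on ℂ ≅ ℝ². -/
noncomputable def gradSq (F : ℂ → ℝ) (z : ℂ) : ℝ :=
  (fderiv ℝ F z 1) ^ 2 + (fderiv ℝ F z I) ^ 2

lemma coreHasFDeriv {g h : ℂ → ℂ} {g' h' : ℂ} {z : ℂ}
    (hg : HasDerivAt g g' z) (hh : HasDerivAt h h' z) :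
    HasFDerivAt (fun w => ((starRingEnd ℂ) (g w) * h w).re)
      (Complex.reCLM.comp
        (((starRingEnd ℂ) (g z)) • (((1 : ℂ →L[ℂ] ℂ).smulRight h').restrictScalars ℝ)
          + (h z) • ((conjCLE.toContinuousLinearMap).comp
              (((1 : ℂ →L[ℂ] ℂ).smulRight g').restrictScalars ℝ)))) z := by
  have Hg : HasFDerivAt g (((1 : ℂ →L[ℂ] ℂ).smulRight g').restrictScalars ℝ) z :=
    (hg.hasFDerivAt.restrictScalars ℝ)
  have Hh : HasFDerivAt h (((1 : ℂ →L[ℂ] ℂ).smulRight h').restrictScalars ℝ) z :=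
    (hh.hasFDerivAt.restrictScalars ℝ)
  have Hgc : HasFDerivAt (fun w => (starRingEnd ℂ) (g w))
      ((conjCLE.toContinuousLinearMap).comp (((1 : ℂ →L[ℂ] ℂ).smulRight g').restrictScalars ℝ)) z :=
    (conjCLE.toContinuousLinearMap.hasFDerivAt).comp z Hg
  exact reCLM.hasFDerivAt.comp z (Hgc.mul Hh)

lemma coreDiff {g h : ℂ → ℂ} {g' h' : ℂ} {z : ℂ}
    (hg : HasDerivAt g g' z) (hh : HasDerivAt h h' z) :
    DifferentiableAt ℝ (fun w => ((starRingEnd ℂ) (g w) * h w).re) z :=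
  (coreHasFDeriv hg hh).differentiableAt

lemma coreFDeriv {g h : ℂ → ℂ} {g' h' : ℂ} {z : ℂ}
    (hg : HasDerivAt g g' z) (hh : HasDerivAt h h' z) (v : ℂ) :
    fderiv ℝ (fun w => ((starRingEnd ℂ) (g w) * h w).re) z v
      = ((starRingEnd ℂ) (g z) * (v * h') + h z * (starRingEnd ℂ) (v * g')).re := by
  rw [(coreHasFDeriv hg hh).fderiv]
  simp [smul_eq_mul]

theorem stmt_6 (U : Set ℂ) (hU : IsOpen U) (f₁ f₂ : ℂ → ℂ) (c : ℝ)
    (hf₁ : ∀ z ∈ U, DifferentiableAt ℂ f₁ z)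
    (hf₂ : ∀ z ∈ U, DifferentiableAt ℂ f₂ z)
    (A : ℂ → ℝ)
    (hA : ∀ z, A z = ‖f₁ z‖ ^ 2 + c * ‖f₂ z‖ ^ 2) :
    ∀ z ∈ U,
      A z * lap A z - gradSq A z
        = 4 * c * ‖f₁ z * deriv f₂ z - f₂ z * deriv f₁ z‖ ^ 2 := by
  have habs : ∀ x : ℂ, ((starRingEnd ℂ) x * x).re = ‖x‖ ^ 2 := by
    intro x
    rw [mul_comm, Complex.mul_conj]
    simp [Complex.sq_norm]
  have hAB : A = fun w => ((starRingEnd ℂ) (f₁ w) * f₁ w).re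
      + c * ((starRingEnd ℂ) (f₂ w) * f₂ w).re := by
    funext w
    rw [hA w, habs, habs]
  have hD₁ : DifferentiableOn ℂ f₁ U := fun w hw => (hf₁ w hw).differentiableWithinAt
  have hD₂ : DifferentiableOn ℂ f₂ U := fun w hw => (hf₂ w hw).differentiableWithinAt
  have han₁ : AnalyticOnNhd ℂ (deriv f₁) U := (hD₁.analyticOnNhd hU).deriv
  have han₂ : AnalyticOnNhd ℂ (deriv f₂) U := (hD₂.analyticOnNhd hU).deriv
  intro z hz
  have hd₁ : ∀ w ∈ U, HasDerivAt f₁ (deriv f₁ w) w := fun w hw => (hf₁ w hw).hasDerivAt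
  have hd₂ : ∀ w ∈ U, HasDerivAt f₂ (deriv f₂ w) w := fun w hw => (hf₂ w hw).hasDerivAt
  have hdd₁ : HasDerivAt (deriv f₁) (deriv (deriv f₁) z) z :=
    (han₁ z hz).differentiableAt.hasDerivAt
  have hdd₂ : HasDerivAt (deriv f₂) (deriv (deriv f₂) z) z :=
    (han₂ z hz).differentiableAt.hasDerivAt
  rw [hAB]
  set B : ℂ → ℝ := fun w => ((starRingEnd ℂ) (f₁ w) * f₁ w).re
      + c * ((starRingEnd ℂ) (f₂ w) * f₂ w).re with hB
  -- first derivative of B on U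
  have claim1 : ∀ v : ℂ, ∀ w ∈ U, fderiv ℝ B w v =
      ((starRingEnd ℂ) (f₁ w) * (v * deriv f₁ w)).re
        + ((starRingEnd ℂ) (v * deriv f₁ w) * f₁ w).re
        + c * (((starRingEnd ℂ) (f₂ w) * (v * deriv f₂ w)).re
              + ((starRingEnd ℂ) (v * deriv f₂ w) * f₂ w).re) := by
    intro v w hw
    have D1 := coreDiff (hd₁ w hw) (hd₁ w hw)
    have D2 := coreDiff (hd₂ w hw) (hd₂ w hw)
    rw [hB]
    rw [fderiv_fun_add D1 (D2.const_mul c), fderiv_const_mul D2 c]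
    simp only [ContinuousLinearMap.add_apply, ContinuousLinearMap.coe_smul', Pi.smul_apply,
      smul_eq_mul]
    rw [coreFDeriv (hd₁ w hw) (hd₁ w hw) v, coreFDeriv (hd₂ w hw) (hd₂ w hw) v]
    rw [Complex.add_re, Complex.add_re, mul_comm (f₁ w), mul_comm (f₂ w)]
  -- second derivative of B at z
  have claim2 : ∀ v : ℂ, fderiv ℝ (fun w => fderiv ℝ B w v) z v =
      ((starRingEnd ℂ) (f₁ z) * (v * (v * deriv (deriv f₁) z))
          + (v * deriv f₁ z) * (starRingEnd ℂ) (v * deriv f₁ z)).re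
      + ((starRingEnd ℂ) (v * deriv f₁ z) * (v * deriv f₁ z)
          + f₁ z * (starRingEnd ℂ) (v * (v * deriv (deriv f₁) z))).re
      + c * ((((starRingEnd ℂ) (f₂ z) * (v * (v * deriv (deriv f₂) z))
          + (v * deriv f₂ z) * (starRingEnd ℂ) (v * deriv f₂ z)).re)
          + ((starRingEnd ℂ) (v * deriv f₂ z) * (v * deriv f₂ z)
          + f₂ z * (starRingEnd ℂ) (v * (v * deriv (deriv f₂) z))).re) := by
    intro v
    have hv₁ : HasDerivAt (fun w => v * deriv f₁ w) (v * deriv (deriv f₁) z) z :=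
      hdd₁.const_mul v
    have hv₂ : HasDerivAt (fun w => v * deriv f₂ w) (v * deriv (deriv f₂) z) z :=
      hdd₂.const_mul v
    have hee : (fun w => fderiv ℝ B w v) =ᶠ[nhds z]
        (fun w => ((starRingEnd ℂ) (f₁ w) * (v * deriv f₁ w)).re
          + ((starRingEnd ℂ) (v * deriv f₁ w) * f₁ w).re
          + c * (((starRingEnd ℂ) (f₂ w) * (v * deriv f₂ w)).re
                + ((starRingEnd ℂ) (v * deriv f₂ w) * f₂ w).re)) := by
      filter_upwards [hU.mem_nhds hz] with w hw using claim1 v w hw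
    rw [hee.fderiv_eq]
    have D1 := coreDiff (hd₁ z hz) hv₁
    have D2 := coreDiff hv₁ (hd₁ z hz)
    have D3 := coreDiff (hd₂ z hz) hv₂
    have D4 := coreDiff hv₂ (hd₂ z hz)
    rw [fderiv_fun_add (D1.fun_add D2) ((D3.fun_add D4).const_mul c), fderiv_fun_add D1 D2,
      fderiv_const_mul (D3.fun_add D4) c, fderiv_fun_add D3 D4]
    simp only [ContinuousLinearMap.add_apply, ContinuousLinearMap.coe_smul', Pi.smul_apply,
      smul_eq_mul]
    rw [coreFDeriv (hd₁ z hz) hv₁ v, coreFDeriv hv₁ (hd₁ z hz) v,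
      coreFDeriv (hd₂ z hz) hv₂ v, coreFDeriv hv₂ (hd₂ z hz) v]
  -- put it together
  unfold lap gradSq
  rw [claim2 1, claim2 I, claim1 1 z hz, claim1 I z hz]
  simp only [hB, Complex.add_re, Complex.mul_re, Complex.mul_im, Complex.conj_re,
    Complex.conj_im, Complex.I_re, Complex.I_im, Complex.sub_re, Complex.sub_im,
    Complex.sq_norm, Complex.normSq_apply, Complex.one_re, Complex.one_im]
  ring
end
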